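/- Let q ≥ 3 be odd and I(B,H,E) the ECH index formula. For every m ≥ 1: I(m−1, 1, q−1) + 2 = I(0, 0, qm + (q−1)/2) and I(m, 0, (q−1)/2) + 2 = I(0, 1, qm). -/

import Mathlib

/-- The ECH index `I(b^B h^H e^E)` of the Reeb current `b^B h^H e^E` for the
perturbed `T(2,q)` contact form on `S³`.  Here `E = qm + r` with `0 ≤ r ≤ q−1`
(so `m = E/q` and `r = E%q` as natural numbers), and `⌊2r/q⌋` is realized by
natural-number division since `0 ≤ 2r/q`. -/
def echI (q B H E : ℕ) : ℚ :=
  2 * E * H - H ^ 2 + (q + 2) * H + 2 * q * B ^ 2 + (q + 3) * B + 4 * E * B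
    + 2 * q * H * B + (2 / q) * E ^ 2 + (q + 1) * ((E / q : ℕ) : ℚ)
    - (2 / q) * ((E % q : ℕ) : ℚ) ^ 2 + 2 * ((E % q : ℕ) : ℚ)
    + ((2 * (E % q) / q : ℕ) : ℚ) * (2 * ((E % q : ℕ) : ℚ) - q + 1)

/-- for `m ≥ 1`,
`I(m−1,1,q−1) + 2 = I(0,0,qm+(q−1)/2)` and `I(m,0,(q−1)/2) + 2 = I(0,1,qm)`. -/
theorem stmt_9 (q : ℕ) (hq3 : 3 ≤ q) (hqodd : Odd q) (m : ℕ) (hm : 1 ≤ m) :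
    echI q (m - 1) 1 (q - 1) + 2 = echI q 0 0 (q * m + (q - 1) / 2) ∧
      echI q m 0 ((q - 1) / 2) + 2 = echI q 0 1 (q * m) := by
  obtain ⟨k, hk⟩ := hqodd
  subst hk
  obtain ⟨m, rfl⟩ : ∃ m', m = m' + 1 := ⟨m - 1, (Nat.succ_pred_eq_of_pos hm).symm⟩
  have hk1 : 1 ≤ k := by omega
  have h1 : 2 * k + 1 - 1 = 2 * k := by omega
  have h2 : (2 * k) / 2 = k := by omega
  have e1d : (2 * k) / (2 * k + 1) = 0 := Nat.div_eq_of_lt (by omega)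
  have e1m : (2 * k) % (2 * k + 1) = 2 * k := Nat.mod_eq_of_lt (by omega)
  have e3d : k / (2 * k + 1) = 0 := Nat.div_eq_of_lt (by omega)
  have e3m : k % (2 * k + 1) = k := Nat.mod_eq_of_lt (by omega)
  have e1f : 2 * (2 * k) / (2 * k + 1) = 1 := by
    have : 2 * (2 * k) = (2 * k + 1) + (2 * k - 1) := by omega
    rw [this, Nat.add_div_left _ (by omega), Nat.div_eq_of_lt (by omega)]
  have e2d : ((2 * k + 1) * (m + 1) + k) / (2 * k + 1) = m + 1 := by
    rw [Nat.mul_add_div (by omega), e3d]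
  have e2m : ((2 * k + 1) * (m + 1) + k) % (2 * k + 1) = k := by
    rw [Nat.mul_add_mod, e3m]
  have e3f : 2 * k / (2 * k + 1) = 0 := Nat.div_eq_of_lt (by omega)
  have e4d : ((2 * k + 1) * (m + 1)) / (2 * k + 1) = m + 1 :=
    Nat.mul_div_cancel_left _ (by omega)
  have e4m : ((2 * k + 1) * (m + 1)) % (2 * k + 1) = 0 := Nat.mul_mod_right _ _
  have hq0 : ((2 * k + 1 : ℕ) : ℚ) ≠ 0 := by positivity
  constructor <;>
  · simp only [echI, h1, h2, e1d, e1m, e1f, e2d, e2m, e3d, e3m, e3f, e4d, e4m,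
      Nat.add_sub_cancel, mul_zero, Nat.zero_div]
    push_cast
    field_simp
    ring
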